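/- Let v_1,...,v_m ∈ ℤ^n. The vectors v_1,...,v_m are Farkas-related if and only if for every elementary integral relation Σ_{i=1}^m a_i v_i = 0 one has a_1,...,a_m ∈ {−1,0,1}. -/

import Mathlib

noncomputable section

/-- The embedding `ℤ^n ⊆ ℚ^n`. -/
def ZtoQ {n : ℕ} (x : Fin n → ℤ) : Fin n → ℚ := fun i => (x i : ℚ)

/-- The vectors `v₁,…,vₘ ∈ ℤ^n` are Farkas-related. -/
def FarkasRelated {n m : ℕ} (v : Fin m → Fin n → ℤ) : Prop :=
  ∀ a b : Fin m → ℤ, (∀ i, a i ≤ b i) →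
    ∀ w : Fin n → ℤ, w ∈ Submodule.span ℤ (Set.range v) →
      (∃ x : Fin m → ℚ, (∀ i, (a i : ℚ) ≤ x i ∧ x i ≤ (b i : ℚ)) ∧
        ZtoQ w = ∑ i, x i • ZtoQ (v i)) →
      ∃ y : Fin m → ℤ, (∀ i, a i ≤ y i ∧ y i ≤ b i) ∧ w = ∑ i, y i • v i

/-- `∑ aᵢ vᵢ = 0` is an elementary integral relation among `v₁,…,vₘ`: the vector
`a` is a nonzero element of the null space `{x ∈ ℚ^m : ∑ xᵢ vᵢ = 0}` whose support is
minimal among supports of nonzero elements of the null space, and whose coordinates are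
relatively prime integers. -/
def IsElemIntRelation {n m : ℕ} (v : Fin m → Fin n → ℤ) (a : Fin m → ℚ) : Prop :=
  (∑ i, a i • ZtoQ (v i)) = 0 ∧ a ≠ 0 ∧
    (∀ y : Fin m → ℚ, (∑ i, y i • ZtoQ (v i)) = 0 → y ≠ 0 →
      {i | y i ≠ 0} ⊆ {i | a i ≠ 0} → {i | y i ≠ 0} = {i | a i ≠ 0}) ∧
    ∃ c : Fin m → ℤ, (∀ i, (c i : ℚ) = a i) ∧ Finset.univ.gcd c = 1

set_option linter.unusedTactic false
open scoped Classical

lemma ZtoQ_sum {n m : ℕ} (v : Fin m → Fin n → ℤ) (u : Fin m → ℤ) :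
    ∑ i, (u i : ℚ) • ZtoQ (v i) = ZtoQ (∑ i, u i • v i) := by
  funext j
  simp only [ZtoQ, Finset.sum_apply, Pi.smul_apply, smul_eq_mul]
  push_cast
  rfl

lemma ZtoQ_inj {n : ℕ} {w w' : Fin n → ℤ} (h : ZtoQ w = ZtoQ w') : w = w' := by
  funext j
  have := congrFun h j
  simpa [ZtoQ] using this

lemma sum_sub_smul {n m : ℕ} (v : Fin m → Fin n → ℤ) (h g : Fin m → ℚ) (t : ℚ) :
    ∑ i, (h i - t * g i) • ZtoQ (v i)
      = (∑ i, h i • ZtoQ (v i)) - t • (∑ i, g i • ZtoQ (v i)) := by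
  rw [Finset.smul_sum, ← Finset.sum_sub_distrib]
  refine Finset.sum_congr rfl fun i _ => ?_
  rw [sub_smul, smul_smul]

lemma exists_int_rep {m : ℕ} (h : Fin m → ℚ) (hne : h ≠ 0) :
    ∃ (c : Fin m → ℤ) (r : ℚ), 0 < r ∧ (∀ i, (c i : ℚ) = r * h i) ∧ Finset.univ.gcd c = 1 := by
  classical
  set N : ℤ := ∏ i, ((h i).den : ℤ) with hNdef
  have hN : 0 < N := Finset.prod_pos fun i _ => by exact_mod_cast (h i).pos
  have key : ∀ i, ∃ k : ℤ, (k : ℚ) = (N : ℚ) * h i := by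
    intro i
    obtain ⟨e, he⟩ : ((h i).den : ℤ) ∣ N :=
      Finset.dvd_prod_of_mem (fun i => ((h i).den : ℤ)) (Finset.mem_univ i)
    refine ⟨(h i).num * e, ?_⟩
    have h0 : ((h i).den : ℚ) ≠ 0 := by
      exact_mod_cast (h i).den_ne_zero
    have hnum : ((h i).num : ℚ) = h i * (h i).den := by
      have hdd := Rat.num_div_den (h i)
      rw [div_eq_iff h0] at hdd
      exact hdd
    rw [he]
    push_cast
    rw [hnum]; ring
  choose c0 hc0 using key
  obtain ⟨i0, hi0⟩ := Function.ne_iff.mp hne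
  have hc0i0 : c0 i0 ≠ 0 := by
    intro h0
    apply hi0
    have hz : (N : ℚ) * h i0 = 0 := by
      rw [← hc0 i0, h0]; push_cast; ring
    have hNQ : (N : ℚ) ≠ 0 := by exact_mod_cast hN.ne'
    rcases mul_eq_zero.mp hz with hh | hh
    · exact absurd hh hNQ
    · exact hh
  set g : ℤ := Finset.univ.gcd c0 with hgdef
  have hg0 : g ≠ 0 := by
    intro hg
    rw [hgdef, Finset.gcd_eq_zero_iff] at hg
    exact hc0i0 (hg i0 (Finset.mem_univ i0))
  have hgpos : 0 < g := by
    have := Int.nonneg_of_normalize_eq_self (Finset.normalize_gcd (f := c0) (s := Finset.univ))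
    omega
  refine ⟨fun i => c0 i / g, (N : ℚ) / (g : ℚ), ?_, ?_, ?_⟩
  · apply div_pos
    · exact_mod_cast hN
    · exact_mod_cast hgpos
  · intro i
    obtain ⟨k, hk⟩ : g ∣ c0 i := Finset.gcd_dvd (Finset.mem_univ i)
    have h1 : c0 i / g = k := by rw [hk]; exact Int.mul_ediv_cancel_left k hg0
    have h2 : ((c0 i : ℤ) : ℚ) = (g : ℚ) * (k : ℚ) := by exact_mod_cast congrArg (Int.cast : ℤ → ℚ) hk
    have hgQ : (g : ℚ) ≠ 0 := by exact_mod_cast hg0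
    show ((c0 i / g : ℤ) : ℚ) = (N : ℚ) / (g : ℚ) * h i
    rw [h1]
    rw [hc0 i] at h2
    field_simp
    linarith [h2]
  · exact Finset.gcd_div_eq_one (f := c0) (Finset.mem_univ i0) hc0i0

lemma exists_elementary {n m : ℕ} (v : Fin m → Fin n → ℤ) (d : Fin m → ℚ)
    (hNS : ∑ i, d i • ZtoQ (v i) = 0) (hd : d ≠ 0) :
    ∃ a : Fin m → ℚ, IsElemIntRelation v a ∧ ∀ i, a i ≠ 0 → d i ≠ 0 := by
  classical
  set P : (Fin m → ℚ) → Prop := fun h =>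
    (∑ i, h i • ZtoQ (v i) = 0) ∧ h ≠ 0 ∧ ∀ i, h i ≠ 0 → d i ≠ 0 with hP
  set sc : (Fin m → ℚ) → ℕ := fun h => (Finset.univ.filter fun i => h i ≠ 0).card with hsc
  set S : Set ℕ := {k | ∃ h, P h ∧ sc h = k} with hS
  have hSne : S.Nonempty := ⟨sc d, d, ⟨hNS, hd, fun _ hi => hi⟩, rfl⟩
  obtain ⟨k, ⟨h, hPh, hsch⟩, hmin⟩ := (Nat.lt_wfRel.wf).has_min S hSne
  obtain ⟨hhNS, hh0, hhsupp⟩ := hPh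
  -- h has minimal support among nonzero null vectors supported in supp d.
  -- key claim: any nonzero null vector with support inside supp h has full support.
  have key : ∀ g : Fin m → ℚ, (∑ i, g i • ZtoQ (v i) = 0) → g ≠ 0 →
      (∀ i, g i ≠ 0 → h i ≠ 0) → ∀ i, h i ≠ 0 → g i ≠ 0 := by
    intro g hgNS hg0 hgsub
    by_contra hcon
    push_neg at hcon
    obtain ⟨i1, hi1h, hi1g⟩ := hcon
    obtain ⟨i2, hi2⟩ := Function.ne_iff.mp hg0
    have hi2g : g i2 ≠ 0 := hi2
    set t : ℚ := h i2 / g i2 with ht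
    set h' : Fin m → ℚ := fun i => h i - t * g i with hh'
    have hNS' : ∑ i, h' i • ZtoQ (v i) = 0 := by
      rw [hh']
      rw [sum_sub_smul v h g t, hhNS, hgNS, smul_zero, sub_zero]
    have hsub' : ∀ i, h' i ≠ 0 → h i ≠ 0 := by
      intro i hi hhi
      have hgi : g i = 0 := by
        by_contra hgi
        exact (hgsub i hgi) hhi
      exact hi (by simp [hh', hhi, hgi])
    have hne' : h' ≠ 0 := by
      intro h0
      apply hi1h
      have := congrFun h0 i1
      simpa [hh', hi1g] using this
    have hP' : P h' := ⟨hNS', hne', fun i hi => hhsupp i (hsub' i hi)⟩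
    have hcard : sc h' < sc h := by
      apply Finset.card_lt_card
      constructor
      · intro i hi
        simp only [Finset.mem_filter, Finset.mem_univ, true_and] at hi ⊢
        exact hsub' i hi
      · intro hsub
        have hi2mem : i2 ∈ Finset.univ.filter fun i => h i ≠ 0 := by
          simp only [Finset.mem_filter, Finset.mem_univ, true_and]
          exact hgsub i2 hi2g
        have := hsub hi2mem
        simp only [Finset.mem_filter, Finset.mem_univ, true_and, hh'] at this
        apply this
        rw [ht]
        field_simp; ring
    rw [hsch] at hcard
    exact hmin (sc h') ⟨h', hP', rfl⟩ hcard
  -- normalize h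
  obtain ⟨c, r, hr, hcr, hgcd⟩ := exists_int_rep h hh0
  set a : Fin m → ℚ := fun i => (c i : ℚ) with ha
  have hsupp_ah : ∀ i, a i ≠ 0 ↔ h i ≠ 0 := by
    intro i
    rw [ha]
    simp only
    rw [hcr i]
    constructor
    · intro hi hhi; exact hi (by rw [hhi, mul_zero])
    · intro hi hri
      rcases mul_eq_zero.mp hri with h0 | h0
      · exact hr.ne' h0
      · exact hi h0
  have haNS : ∑ i, a i • ZtoQ (v i) = 0 := by
    have : ∀ i, a i • ZtoQ (v i) = r • (h i • ZtoQ (v i)) := by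
      intro i
      rw [ha]
      simp only
      rw [hcr i, smul_smul]
    rw [Finset.sum_congr rfl fun i _ => this i, ← Finset.smul_sum, hhNS, smul_zero]
  have ha0 : a ≠ 0 := by
    obtain ⟨i0, hi0⟩ := Function.ne_iff.mp hh0
    exact Function.ne_iff.mpr ⟨i0, (hsupp_ah i0).mpr hi0⟩
  refine ⟨a, ⟨haNS, ha0, ?_, c, fun i => rfl, hgcd⟩, fun i hi => hhsupp i ((hsupp_ah i).mp hi)⟩
  intro y hyNS hy0 hysub
  have hysub' : ∀ i, y i ≠ 0 → h i ≠ 0 := fun i hi => (hsupp_ah i).mp (hysub hi)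
  have hyfull := key y hyNS hy0 hysub'
  ext i
  simp only [Set.mem_setOf_eq]
  constructor
  · intro hi; exact (hsupp_ah i).mpr (hysub' i hi)
  · intro hi; exact hyfull i ((hsupp_ah i).mp hi)

lemma claimC {n m : ℕ} (v : Fin m → Fin n → ℤ)
    (Helem : ∀ a : Fin m → ℚ, IsElemIntRelation v a → ∀ i, a i = -1 ∨ a i = 0 ∨ a i = 1)
    (F : Fin m → Prop)
    (hW : ∀ g : Fin m → ℚ, (∑ i, g i • ZtoQ (v i) = 0) → (∀ i, g i ≠ 0 → F i) → g = 0) :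
    ∀ (N : ℕ) (d : Fin m → ℚ), (Finset.univ.filter fun i => d i ≠ 0).card ≤ N →
      (∑ i, d i • ZtoQ (v i) = 0) →
      (∀ i, ¬ F i → ∃ k : ℤ, d i = (k : ℚ)) →
      ∀ i, ∃ k : ℤ, d i = (k : ℚ) := by
  classical
  intro N
  induction N with
  | zero =>
    intro d hcard _ _ i
    refine ⟨0, ?_⟩
    by_contra hne
    have : i ∈ Finset.univ.filter fun i => d i ≠ 0 := by
      simp only [Finset.mem_filter, Finset.mem_univ, true_and]
      simpa using hne
    have := Finset.card_pos.mpr ⟨i, this⟩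
    omega
  | succ N ih =>
    intro d hcard hNS hdF
    by_cases hd0 : d = 0
    · intro i; exact ⟨0, by simp [hd0]⟩
    obtain ⟨a, haElem, hasupp⟩ := exists_elementary v d hNS hd0
    have hval := Helem a haElem
    have haNS := haElem.1
    have ha0 := haElem.2.1
    -- some coordinate of the support of a lies outside F
    have : ∃ b, a b ≠ 0 ∧ ¬ F b := by
      by_contra hcon
      push_neg at hcon
      exact ha0 (hW a haNS hcon)
    obtain ⟨b, hab, hbF⟩ := this
    obtain ⟨k, hk⟩ := hdF b hbF
    obtain ⟨e, he⟩ : ∃ e : ℤ, (e : ℚ) = (k : ℚ) * a b := by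
      rcases hval b with h | h | h
      · exact ⟨-k, by rw [h]; push_cast; ring⟩
      · exact absurd h hab
      · exact ⟨k, by rw [h]; push_cast; ring⟩
    set t : ℚ := (e : ℚ) with ht
    set d' : Fin m → ℚ := fun i => d i - t * a i with hd'
    have hd'NS : ∑ i, d' i • ZtoQ (v i) = 0 := by
      rw [hd', sum_sub_smul v d a t, hNS, haNS, smul_zero, sub_zero]
    have hd'b : d' b = 0 := by
      rcases hval b with h | h | h
      · have he' : (e : ℚ) = -(k : ℚ) := by rw [← ht, he, h]; ring
        simp only [hd', ht]; rw [hk, he', h]; ring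
      · exact absurd h hab
      · have he' : (e : ℚ) = (k : ℚ) := by rw [← ht, he, h]; ring
        simp only [hd', ht]; rw [hk, he', h]; ring
    have hsub : ∀ i, d' i ≠ 0 → d i ≠ 0 := by
      intro i hi hdi
      have hai : a i = 0 := by
        by_contra hai
        exact (hasupp i hai) hdi
      exact hi (by simp [hd', hdi, hai])
    have hcard' : (Finset.univ.filter fun i => d' i ≠ 0).card ≤ N := by
      have hss : (Finset.univ.filter fun i => d' i ≠ 0) ⊂ (Finset.univ.filter fun i => d i ≠ 0) := by
        constructor
        · intro i hi
          simp only [Finset.mem_filter, Finset.mem_univ, true_and] at hi ⊢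
          exact hsub i hi
        · intro hs
          have hbmem : b ∈ Finset.univ.filter fun i => d i ≠ 0 := by
            simp only [Finset.mem_filter, Finset.mem_univ, true_and]
            exact hasupp b hab
          have := hs hbmem
          simp only [Finset.mem_filter, Finset.mem_univ, true_and] at this
          exact this hd'b
      have := Finset.card_lt_card hss
      omega
    have hd'F : ∀ i, ¬ F i → ∃ k' : ℤ, d' i = (k' : ℚ) := by
      intro i hFi
      obtain ⟨ki, hki⟩ := hdF i hFi
      rcases hval i with h | h | h
      · exact ⟨ki + e, by simp only [hd', ht]; rw [hki, h]; push_cast; ring⟩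
      · exact ⟨ki, by simp only [hd', ht]; rw [hki, h]; push_cast; ring⟩
      · exact ⟨ki - e, by simp only [hd', ht]; rw [hki, h]; push_cast; ring⟩
    have hint' := ih d' hcard' hd'NS hd'F
    intro i
    obtain ⟨ki, hki⟩ := hint' i
    have hdd : d i = d' i + t * a i := by simp [hd']
    rcases hval i with h | h | h
    · exact ⟨ki - e, by rw [hdd, hki, h, ht]; push_cast; ring⟩
    · exact ⟨ki, by rw [hdd, hki, h, ht]; push_cast; ring⟩
    · exact ⟨ki + e, by rw [hdd, hki, h, ht]; push_cast; ring⟩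

lemma allInt_case {n m : ℕ} (v : Fin m → Fin n → ℤ) (a b : Fin m → ℤ) (w : Fin n → ℤ)
    (x : Fin m → ℚ) (hbox : ∀ i, (a i : ℚ) ≤ x i ∧ x i ≤ (b i : ℚ))
    (heq : ZtoQ w = ∑ i, x i • ZtoQ (v i))
    (hint : ∀ i, ∃ k : ℤ, x i = (k : ℚ)) :
    ∃ y : Fin m → ℤ, (∀ i, a i ≤ y i ∧ y i ≤ b i) ∧ w = ∑ i, y i • v i := by
  choose y hy using hint
  refine ⟨y, fun i => ⟨?_, ?_⟩, ?_⟩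
  · exact_mod_cast (hy i) ▸ (hbox i).1
  · exact_mod_cast (hy i) ▸ (hbox i).2
  · apply ZtoQ_inj
    rw [heq, ← ZtoQ_sum v y]
    refine Finset.sum_congr rfl fun i _ => ?_
    rw [hy i]

lemma slide {n m : ℕ} (v : Fin m → Fin n → ℤ)
    (Helem : ∀ a : Fin m → ℚ, IsElemIntRelation v a → ∀ i, a i = -1 ∨ a i = 0 ∨ a i = 1)
    (a b : Fin m → ℤ) (w : Fin n → ℤ) (z : Fin m → ℤ) (hzw : ∑ i, z i • v i = w) :
    ∀ (N : ℕ) (x : Fin m → ℚ), (∀ i, (a i : ℚ) ≤ x i ∧ x i ≤ (b i : ℚ)) →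
      (ZtoQ w = ∑ i, x i • ZtoQ (v i)) →
      ((Finset.univ.filter fun i => ¬ ∃ k : ℤ, x i = (k : ℚ)).card ≤ N) →
      ∃ y : Fin m → ℤ, (∀ i, a i ≤ y i ∧ y i ≤ b i) ∧ w = ∑ i, y i • v i := by
  classical
  intro N
  induction N with
  | zero =>
    intro x hbox heq hcard
    refine allInt_case v a b w x hbox heq fun i => ?_
    by_contra hni
    have : i ∈ Finset.univ.filter fun i => ¬ ∃ k : ℤ, x i = (k : ℚ) := by
      simp only [Finset.mem_filter, Finset.mem_univ, true_and]; exact hni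
    have := Finset.card_pos.mpr ⟨i, this⟩
    omega
  | succ N ih =>
    intro x hbox heq hcard
    by_cases hall : ∀ i, ∃ k : ℤ, x i = (k : ℚ)
    · exact allInt_case v a b w x hbox heq hall
    push_neg at hall
    obtain ⟨ifr, hifr⟩ := hall
    -- the difference with the integral solution z lies in the null space
    set d : Fin m → ℚ := fun i => x i - (z i : ℚ) with hd
    have hdNS : ∑ i, d i • ZtoQ (v i) = 0 := by
      have h1 : ∑ i, (x i - 1 * (z i : ℚ)) • ZtoQ (v i)
          = (∑ i, x i • ZtoQ (v i)) - (1:ℚ) • (∑ i, (z i : ℚ) • ZtoQ (v i)) :=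
        sum_sub_smul v x (fun i => (z i : ℚ)) 1
      have h2 : ∑ i, d i • ZtoQ (v i) = ∑ i, (x i - 1 * (z i : ℚ)) • ZtoQ (v i) := by
        refine Finset.sum_congr rfl fun i _ => ?_
        simp [hd]
      rw [h2, h1, ZtoQ_sum v z, hzw, ← heq, one_smul, sub_self]
    -- Fractionality predicate (of x)
    set F : Fin m → Prop := fun i => ¬ ∃ k : ℤ, x i = (k : ℚ) with hF
    have hdint : ∀ i, ¬ F i → ∃ k : ℤ, d i = (k : ℚ) := by
      intro i hFi
      rw [hF, not_not] at hFi
      obtain ⟨k, hk⟩ := hFi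
      exact ⟨k - z i, by simp only [hd]; rw [hk]; push_cast; ring⟩
    by_cases hW : ∀ g : Fin m → ℚ, (∑ i, g i • ZtoQ (v i) = 0) → (∀ i, g i ≠ 0 → F i) → g = 0
    · -- then d is integral everywhere, contradicting the fractional coordinate
      exfalso
      have hint := claimC v Helem F hW (Finset.univ.filter fun i => d i ≠ 0).card d
        le_rfl hdNS hdint
      obtain ⟨k, hk⟩ := hint ifr
      apply hifr (k + z ifr)
      have hxd : x ifr = d ifr + (z ifr : ℚ) := by simp [hd]
      rw [hxd, hk]; push_cast; ring
    push_neg at hW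
    obtain ⟨g, hgNS, hgsupp, hg0⟩ := hW
    set Sg : Finset (Fin m) := Finset.univ.filter fun i => g i ≠ 0 with hSg
    have hSgne : Sg.Nonempty := by
      obtain ⟨j, hj⟩ := Function.ne_iff.mp hg0
      exact ⟨j, by simp only [hSg, Finset.mem_filter, Finset.mem_univ, true_and]; exact hj⟩
    set δ : Fin m → ℚ := fun i =>
      if 0 < g i then ((⌈x i⌉ : ℚ) - x i) / g i else ((⌊x i⌋ : ℚ) - x i) / g i with hδ
    have hxne : ∀ i ∈ Sg, (∀ k : ℤ, x i ≠ (k : ℚ)) := by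
      intro i hi k hk
      have hgi : g i ≠ 0 := by
        simpa only [hSg, Finset.mem_filter, Finset.mem_univ, true_and] using hi
      exact hgsupp i hgi ⟨k, hk⟩
    have hδpos : ∀ i ∈ Sg, 0 < δ i := by
      intro i hi
      have hgi : g i ≠ 0 := by
        simpa only [hSg, Finset.mem_filter, Finset.mem_univ, true_and] using hi
      rw [hδ]
      simp only
      by_cases hpos : 0 < g i
      · rw [if_pos hpos]
        apply div_pos _ hpos
        have h1 : x i ≤ (⌈x i⌉ : ℚ) := Int.le_ceil _
        have h2 : x i ≠ (⌈x i⌉ : ℚ) := hxne i hi _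
        have := lt_of_le_of_ne h1 h2
        linarith
      · rw [if_neg hpos]
        have hneg : g i < 0 := lt_of_le_of_ne (not_lt.mp hpos) hgi
        have h1 : (⌊x i⌋ : ℚ) ≤ x i := Int.floor_le _
        have h2 : x i ≠ (⌊x i⌋ : ℚ) := hxne i hi _
        have h3 : (⌊x i⌋ : ℚ) - x i < 0 := by
          have := lt_of_le_of_ne h1 (fun hh => h2 hh.symm)
          linarith
        exact div_pos_iff.mpr (Or.inr ⟨h3, hneg⟩)
    obtain ⟨istar, histar, hminδ⟩ := Finset.exists_min_image Sg δ hSgne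
    set s : ℚ := δ istar with hsdef
    have hs : 0 < s := hδpos istar histar
    set x' : Fin m → ℚ := fun i => x i + s * g i with hx'
    -- box bounds for x'
    have hbox' : ∀ i, (a i : ℚ) ≤ x' i ∧ x' i ≤ (b i : ℚ) := by
      intro i
      by_cases hgi : g i = 0
      · simpa [hx', hgi] using hbox i
      have himem : i ∈ Sg := by
        simp only [hSg, Finset.mem_filter, Finset.mem_univ, true_and]; exact hgi
      have hfl : (a i : ℚ) ≤ (⌊x i⌋ : ℚ) := by
        exact_mod_cast Int.le_floor.mpr (hbox i).1
      have hcl : ((⌈x i⌉ : ℚ)) ≤ (b i : ℚ) := by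
        exact_mod_cast Int.ceil_le.mpr (hbox i).2
      have hsle : s ≤ δ i := hminδ i himem
      by_cases hpos : 0 < g i
      · constructor
        · have : 0 ≤ s * g i := le_of_lt (mul_pos hs hpos)
          have := (hbox i).1
          simp only [hx']
          linarith
        · have h1 : s * g i ≤ δ i * g i := mul_le_mul_of_nonneg_right hsle hpos.le
          have h2 : δ i * g i = (⌈x i⌉ : ℚ) - x i := by
            rw [hδ]; simp only [if_pos hpos]; field_simp
          simp only [hx']
          linarith
      · have hneg : g i < 0 := lt_of_le_of_ne (not_lt.mp hpos) hgi
        constructor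
        · have h1 : δ i * g i ≤ s * g i := mul_le_mul_of_nonpos_right hsle hneg.le
          have h2 : δ i * g i = (⌊x i⌋ : ℚ) - x i := by
            rw [hδ]; simp only [if_neg hpos]; field_simp
          simp only [hx']
          linarith
        · have : s * g i < 0 := mul_neg_of_pos_of_neg hs hneg
          have := (hbox i).2
          simp only [hx']
          linarith
    -- equation for x'
    have heq' : ZtoQ w = ∑ i, x' i • ZtoQ (v i) := by
      have h1 := sum_sub_smul v x g (-s)
      have h2 : ∑ i, x' i • ZtoQ (v i) = ∑ i, (x i - (-s) * g i) • ZtoQ (v i) := by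
        refine Finset.sum_congr rfl fun i _ => ?_
        have : x' i = x i - (-s) * g i := by simp only [hx']; ring
        rw [this]
      rw [h2, h1, hgNS, smul_zero, sub_zero, heq]
    -- fractional set decreases
    have hsubfr : (Finset.univ.filter fun i => ¬ ∃ k : ℤ, x' i = (k : ℚ))
        ⊆ (Finset.univ.filter fun i => ¬ ∃ k : ℤ, x i = (k : ℚ)).erase istar := by
      intro i hi
      simp only [Finset.mem_filter, Finset.mem_univ, true_and] at hi
      rw [Finset.mem_erase]
      constructor
      · -- i ≠ istar since x' istar is integral
        rintro rfl
        apply hi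
        by_cases hpos : 0 < g i
        · refine ⟨⌈x i⌉, ?_⟩
          have h2 : δ i * g i = (⌈x i⌉ : ℚ) - x i := by
            rw [hδ]; simp only [if_pos hpos]; field_simp
          simp only [hx', hsdef]
          linarith
        · have hgi : g i ≠ 0 := by
            simpa only [hSg, Finset.mem_filter, Finset.mem_univ, true_and] using histar
          have h2 : δ i * g i = (⌊x i⌋ : ℚ) - x i := by
            rw [hδ]; simp only [if_neg hpos]; field_simp
          refine ⟨⌊x i⌋, ?_⟩
          simp only [hx', hsdef]
          linarith
      · simp only [Finset.mem_filter, Finset.mem_univ, true_and]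
        intro hxint
        apply hi
        obtain ⟨k, hk⟩ := hxint
        have hgi : g i = 0 := by
          by_contra hgi
          exact hgsupp i hgi ⟨k, hk⟩
        exact Exists.intro k (by simp only [hx', hgi]; rw [mul_zero, add_zero]; exact hk)
    have hcard' : (Finset.univ.filter fun i => ¬ ∃ k : ℤ, x' i = (k : ℚ)).card ≤ N := by
      have h1 := Finset.card_le_card hsubfr
      have histar' : istar ∈ (Finset.univ.filter fun i => ¬ ∃ k : ℤ, x i = (k : ℚ)) := by
        simp only [Finset.mem_filter, Finset.mem_univ, true_and]
        intro ⟨k, hk⟩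
        exact hxne istar histar k hk
      have h2 := Finset.card_erase_of_mem histar'
      have h3 := Finset.card_pos.mpr ⟨istar, histar'⟩
      omega
    exact ih x' hbox' heq' hcard'

/-- **Proposition 3.5**: `v₁,…,vₘ` are Farkas-related iff every elementary integral
relation `∑ aᵢ vᵢ = 0` has all coefficients in `{-1, 0, 1}`. -/
theorem farkasRelated_iff_elementary {n m : ℕ} (v : Fin m → Fin n → ℤ) :
    FarkasRelated v ↔
      ∀ a : Fin m → ℚ, IsElemIntRelation v a →
        ∀ i, a i = -1 ∨ a i = 0 ∨ a i = 1 := by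
  constructor
  · -- Farkas-related implies elementary relations have small coefficients
    intro hF aa hrel i0
    obtain ⟨haNS, ha0, hmin, c, hc, hgcd⟩ := hrel
    by_cases h0 : aa i0 = 0
    · exact Or.inr (Or.inl h0)
    set x : Fin m → ℚ := fun i => aa i / aa i0 with hx
    have hxNS : ∑ i, x i • ZtoQ (v i) = 0 := by
      have hh : ∀ i, x i • ZtoQ (v i) = (aa i0)⁻¹ • (aa i • ZtoQ (v i)) := by
        intro i
        rw [smul_smul]
        congr 1
        rw [hx]
        simp only
        rw [div_eq_inv_mul]
      rw [Finset.sum_congr rfl fun i _ => hh i, ← Finset.smul_sum, haNS, smul_zero]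
    have hx0 : x i0 = 1 := div_self h0
    obtain ⟨y, hybox, hyeq⟩ := hF (fun i => ⌊x i⌋) (fun i => ⌈x i⌉)
      (fun i => Int.floor_le_ceil _) 0 (Submodule.zero_mem _)
      ⟨x, fun i => ⟨Int.floor_le _, Int.le_ceil _⟩, by
        rw [hxNS]; funext j; simp [ZtoQ]⟩
    have hyNS : ∑ i, (y i : ℚ) • ZtoQ (v i) = 0 := by
      rw [ZtoQ_sum v y, ← hyeq]
      funext j; simp [ZtoQ]
    have hyi0 : y i0 = 1 := by
      have h1 := (hybox i0).1
      have h2 := (hybox i0).2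
      rw [hx0] at h1 h2
      simp at h1 h2
      omega
    have hysupp : ∀ i, aa i = 0 → y i = 0 := by
      intro i hi
      have hxi : x i = 0 := by rw [hx]; simp only; rw [hi, zero_div]
      have h1 := (hybox i).1
      have h2 := (hybox i).2
      rw [hxi] at h1 h2
      simp at h1 h2
      omega
    set u : Fin m → ℚ := fun i => (y i : ℚ) - x i with hu
    have huNS : ∑ i, u i • ZtoQ (v i) = 0 := by
      have hh : ∑ i, ((y i : ℚ) - 1 * x i) • ZtoQ (v i)
          = (∑ i, (y i : ℚ) • ZtoQ (v i)) - (1:ℚ) • (∑ i, x i • ZtoQ (v i)) :=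
        sum_sub_smul v _ x 1
      have hh2 : ∑ i, u i • ZtoQ (v i) = ∑ i, ((y i : ℚ) - 1 * x i) • ZtoQ (v i) := by
        refine Finset.sum_congr rfl fun i _ => ?_
        congr 1
        rw [hu]; simp only; ring
      rw [hh2, hh, hyNS, hxNS, smul_zero, sub_zero]
    have hui0 : u i0 = 0 := by rw [hu]; simp only; rw [hx0, hyi0]; norm_num
    have husupp : ∀ i, u i ≠ 0 → aa i ≠ 0 := by
      intro i hi hai
      apply hi
      rw [hu]; simp only
      rw [hysupp i hai]
      have hxi : x i = 0 := by rw [hx]; simp only; rw [hai, zero_div]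
      rw [hxi]
      norm_num
    have hu0 : u = 0 := by
      by_contra hu0
      have := hmin u huNS hu0 (fun i hi => husupp i hi)
      have hi0mem : i0 ∈ {i | aa i ≠ 0} := h0
      rw [← this] at hi0mem
      exact hi0mem hui0
    -- so (y i : ℚ) = aa i / aa i0 for all i, hence c i0 divides every c i
    have hdvd : ∀ i, c i = c i0 * y i := by
      intro i
      have h1 : u i = 0 := by rw [hu0]; rfl
      rw [hu] at h1
      simp only at h1
      have h2 : (y i : ℚ) = aa i / aa i0 := by
        have : x i = aa i / aa i0 := rfl
        linarith [sub_eq_zero.mp h1, this]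
      have h3 : (y i : ℚ) * aa i0 = aa i := by
        field_simp at h2
        linarith [h2]
      rw [← hc i, ← hc i0] at h3
      have h4 : ((c i0 * y i : ℤ) : ℚ) = ((c i : ℤ) : ℚ) := by push_cast; linarith [h3]
      exact_mod_cast h4.symm
    have hdvd2 : c i0 ∣ Finset.univ.gcd c := by
      apply Finset.dvd_gcd
      intro i _
      exact ⟨y i, hdvd i⟩
    rw [hgcd] at hdvd2
    have := Int.isUnit_iff.mp (isUnit_of_dvd_one hdvd2)
    rcases this with h | h
    · right; right; rw [← hc i0, h]; norm_num
    · left; rw [← hc i0, h]; norm_num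
  · -- converse
    intro h a b hab w hw hex
    obtain ⟨x, hbox, heq⟩ := hex
    obtain ⟨z, hz⟩ := (Submodule.mem_span_range_iff_exists_fun ℤ).mp hw
    exact slide v h a b w z hz _ x hbox heq le_rfl
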